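/- arXiv:math/0101081 — 2 statements merged into one kernel-verified Lean document; each statement's English description precedes it below -/
import Mathlib

section
/- Let T = T(f_1,...,f_n) be the Taylor complex of monomials f_1,...,f_n in R = K[x_1,...,x_n], with basis {e_σ : σ ⊆ [n]} and product e_σ·e_τ = (f_σ f_τ / f_{σ∪τ}) e_σ ∧ e_τ (where f_τ is the lcm of {f_i : i ∈ τ}). Then this product satisfies the Leibniz rule with respect to the Taylor differential ∂(e_σ) = Σ_{i∈σ} (−1)^{|{j∈σ : j<i}|} (f_σ / f_{σ\{i\}}) e_{σ\{i}}, making T a DG algebra. -/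
/-! Statement 14: the product `e_σ e_τ = (f_σ f_τ / f_{σ∪τ}) e_σ ∧ e_τ` on the
Taylor complex of monomials `f₁,…,fₙ` satisfies the Leibniz rule with respect
to the Taylor differential, making the Taylor complex a DG algebra. -/

/-- A monomial in the `N` variables of `K[x_1,…,x_N]`, recorded by its
exponent vector. -/
abbrev Mon (N : ℕ) := Fin N → ℕ

/-- The monomial `x^a` in `K[x_1,…,x_N]`. -/
noncomputable def toMon (K : Type*) [CommSemiring K] {N : ℕ} (a : Mon N) :
    MvPolynomial (Fin N) K :=
  MvPolynomial.monomial (Finsupp.equivFunOnFinite.symm a) 1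

/-- exponent vector of `f_τ`, the least common multiple of the monomials of
exponents `f i`, `i ∈ τ`. -/
def lcmExp {n N : ℕ} (f : Fin n → Mon N) (τ : Finset (Fin n)) : Mon N :=
  fun k => τ.sup fun j => f j k

variable {K : Type*} [CommRing K] {n N : ℕ}

/-- The underlying module of the Taylor complex on `n` monomials: the free
module with basis `e_σ`, `σ ⊆ [n]` (the homological grading is by `σ.card`). -/
abbrev TaylorCx (K : Type*) [CommRing K] (n N : ℕ) :=
  Finset (Fin n) →₀ MvPolynomial (Fin N) K

/-- the sign `(-1)^{|{j ∈ σ : j < i}|}` -/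
def tsign {n : ℕ} (σ : Finset (Fin n)) (i : Fin n) : ℤ :=
  (-1) ^ (σ.filter fun j => j < i).card

open Classical in
/-- the Taylor differential on a basis element:
`∂ e_σ = Σ_{i ∈ σ} (-1)^{|{j∈σ : j<i}|} (f_σ / f_{σ\{i}}) e_{σ\{i}}`. -/
noncomputable def delB (f : Fin n → Mon N) (σ : Finset (Fin n)) : TaylorCx K n N :=
  ∑ i ∈ σ, tsign σ i •
    Finsupp.single (σ.erase i) (toMon K (lcmExp f σ - lcmExp f (σ.erase i)))

/-- the Taylor differential. -/
noncomputable def delT (f : Fin n → Mon N) (x : TaylorCx K n N) : TaylorCx K n N :=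
  x.sum fun σ c => c • delB f σ

/-- the sign of the shuffle merging `σ` and `τ`, coming from `e_σ ∧ e_τ` -/
def wsign {n : ℕ} (σ τ : Finset (Fin n)) : ℤ :=
  (-1) ^ ((σ ×ˢ τ).filter fun p => p.2 < p.1).card

open Classical in
/-- the product of two basis elements:
`e_σ e_τ = (f_σ f_τ / f_{σ∪τ}) e_σ ∧ e_τ`, which is zero if `σ ∩ τ ≠ ∅`. -/
noncomputable def mulB (f : Fin n → Mon N) (σ τ : Finset (Fin n)) : TaylorCx K n N :=
  if Disjoint σ τ then
    wsign σ τ •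
      Finsupp.single (σ ∪ τ)
        (toMon K (lcmExp f σ + lcmExp f τ - lcmExp f (σ ∪ τ)))
  else 0

/-- the product on the Taylor complex. -/
noncomputable def mulT (f : Fin n → Mon N) (x y : TaylorCx K n N) : TaylorCx K n N :=
  x.sum fun σ c => y.sum fun τ d => (c * d) • mulB f σ τ

lemma equivsymm_add {N : ℕ} (a b : Mon N) :
    Finsupp.equivFunOnFinite.symm (a + b)
      = Finsupp.equivFunOnFinite.symm a + Finsupp.equivFunOnFinite.symm b := by
  ext k; simp

lemma toMon_mul {K : Type*} [CommSemiring K] {N : ℕ} (a b : Mon N) :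
    toMon K a * toMon K b = toMon K (a + b) := by
  simp [toMon, MvPolynomial.monomial_mul, equivsymm_add]

lemma neg_one_pow_congr' (a b : ℕ) (h : a % 2 = b % 2) : (-1 : ℤ)^a = (-1)^b := by
  rw [← Nat.div_add_mod a 2, ← Nat.div_add_mod b 2, pow_add, pow_add, pow_mul, pow_mul]
  norm_num [h]

lemma wcard {n : ℕ} (σ τ : Finset (Fin n)) :
    ((σ ×ˢ τ).filter fun p => p.2 < p.1).card
      = ∑ a ∈ σ, (τ.filter (· < a)).card := by
  rw [Finset.card_filter, Finset.sum_product]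
  congr 1; funext a
  rw [Finset.card_filter]

-- s σ i = (σ.filter (· < i)).card
lemma wcard_erase_left {n : ℕ} (σ τ : Finset (Fin n)) {i : Fin n} (hi : i ∈ σ) :
    ((σ ×ˢ τ).filter fun p => p.2 < p.1).card
      = (τ.filter (· < i)).card + (((σ.erase i) ×ˢ τ).filter fun p => p.2 < p.1).card := by
  rw [wcard, wcard, ← Finset.add_sum_erase _ _ hi]

lemma wcard_erase_right {n : ℕ} (σ τ : Finset (Fin n)) {i : Fin n} (hi : i ∈ τ) :
    ((σ ×ˢ τ).filter fun p => p.2 < p.1).card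
      = (σ.filter (fun p => i < p)).card
        + ((σ ×ˢ (τ.erase i)).filter fun p => p.2 < p.1).card := by
  rw [wcard, wcard]
  have h : ∀ a ∈ σ, (τ.filter (· < a)).card
      = (if i < a then 1 else 0) + ((τ.erase i).filter (· < a)).card := by
    intro a _
    rw [Finset.filter_erase]
    by_cases h : i < a
    · have hmem : i ∈ τ.filter (· < a) := Finset.mem_filter.2 ⟨hi, h⟩
      rw [Finset.card_erase_of_mem hmem]
      have : 0 < (τ.filter (· < a)).card := Finset.card_pos.2 ⟨i, hmem⟩
      simp [h]; omega
    · rw [Finset.erase_eq_of_notMem (by simp [h])]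
      simp [h]
  rw [Finset.sum_congr rfl h, Finset.sum_add_distrib]
  congr 1
  rw [Finset.card_filter]

lemma card_split_not_mem {n : ℕ} (σ : Finset (Fin n)) {i : Fin n} (hi : i ∉ σ) :
    (σ.filter (· < i)).card + (σ.filter (fun p => i < p)).card = σ.card := by
  rw [← Finset.card_filter_add_card_filter_not (p := (· < i)) (s := σ)]
  congr 2
  apply Finset.filter_congr
  intro a ha
  have : a ≠ i := fun h => hi (h ▸ ha)
  simp only [not_lt]
  constructor
  · intro h; omega
  · intro h; omega

lemma card_split_mem {n : ℕ} (σ : Finset (Fin n)) {i : Fin n} (hi : i ∈ σ) :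
    (σ.filter (· < i)).card + (σ.filter (fun p => i < p)).card + 1 = σ.card := by
  have h1 := card_split_not_mem (σ.erase i) (Finset.notMem_erase i σ)
  rw [Finset.filter_erase, Finset.filter_erase] at h1
  rw [Finset.erase_eq_of_notMem (by simp), Finset.erase_eq_of_notMem (by simp)] at h1
  rw [Finset.card_erase_of_mem hi] at h1
  have : 0 < σ.card := Finset.card_pos.2 ⟨i, hi⟩
  omega


-- ===== sign lemmas =====
lemma neg_one_pow_neg_congr (a b : ℕ) (h : a % 2 = (b+1) % 2) :
    (-1 : ℤ)^a = -(-1)^b := by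
  rw [neg_one_pow_congr' a (b+1) h, pow_succ, mul_neg_one]

lemma sign1 {n : ℕ} {σ τ : Finset (Fin n)} {i : Fin n} (hi : i ∈ σ)
    (hd : Disjoint σ τ) :
    wsign σ τ * tsign (σ ∪ τ) i = tsign σ i * wsign (σ.erase i) τ := by
  unfold wsign tsign
  rw [← pow_add, ← pow_add]
  apply neg_one_pow_congr'
  have h1 := wcard_erase_left σ τ hi
  have h2 : ((σ ∪ τ).filter fun j => j < i).card
      = (σ.filter fun j => j < i).card + (τ.filter fun j => j < i).card := by
    rw [Finset.filter_union,
      Finset.card_union_of_disjoint (Finset.disjoint_filter_filter hd)]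
  omega

lemma sign2 {n : ℕ} {σ τ : Finset (Fin n)} {i : Fin n} (hi : i ∈ τ)
    (hd : Disjoint σ τ) :
    wsign σ τ * tsign (σ ∪ τ) i
      = (-1)^σ.card * (tsign τ i * wsign σ (τ.erase i)) := by
  unfold wsign tsign
  rw [← pow_add, ← pow_add, ← pow_add]
  apply neg_one_pow_congr'
  have h1 := wcard_erase_right σ τ hi
  have h2 : ((σ ∪ τ).filter fun j => j < i).card
      = (σ.filter fun j => j < i).card + (τ.filter fun j => j < i).card := by
    rw [Finset.filter_union,
      Finset.card_union_of_disjoint (Finset.disjoint_filter_filter hd)]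
  have h3 : i ∉ σ := fun h => (Finset.disjoint_left.mp hd h) hi
  have h4 := card_split_not_mem σ h3
  omega

lemma sign3 {n : ℕ} {σ τ : Finset (Fin n)} {i : Fin n} (hiσ : i ∈ σ) (hiτ : i ∈ τ) :
    tsign σ i * wsign (σ.erase i) τ
      = -((-1)^σ.card * (tsign τ i * wsign σ (τ.erase i))) := by
  unfold wsign tsign
  rw [← pow_add, ← pow_add, ← pow_add]
  apply neg_one_pow_neg_congr
  have h1 := wcard_erase_left σ τ hiσ
  have h2 := wcard_erase_right σ τ hiτ
  have h3 := card_split_mem σ hiσ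
  omega

-- ===== lcmExp lemmas =====
lemma lcmExp_mono {n N : ℕ} (f : Fin n → Mon N) {ρ ρ' : Finset (Fin n)}
    (h : ρ ⊆ ρ') (k : Fin N) : lcmExp f ρ k ≤ lcmExp f ρ' k :=
  Finset.sup_mono h

lemma lcmExp_union_le {n N : ℕ} (f : Fin n → Mon N) (ρ ρ' : Finset (Fin n))
    (k : Fin N) : lcmExp f (ρ ∪ ρ') k ≤ lcmExp f ρ k + lcmExp f ρ' k := by
  unfold lcmExp
  rw [Finset.sup_union]
  exact max_le (Nat.le_add_right _ _) (Nat.le_add_left _ _)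

-- ===== smul/single normalization =====
lemma zps {K : Type*} [CommRing K] {n N : ℕ} (z w : ℤ)
    (p q : MvPolynomial (Fin N) K) (A : Finset (Fin n)) :
    z • (p • (w • Finsupp.single A q)) = Finsupp.single A ((z*w) • (p*q)) := by
  rw [smul_comm p w, Finsupp.smul_single, smul_eq_mul, smul_smul,
    Finsupp.smul_single]

-- ===== linear maps =====

noncomputable def delL (f : Fin n → Mon N) :
    TaylorCx K n N →ₗ[MvPolynomial (Fin N) K] TaylorCx K n N :=
  Finsupp.lsum ℕ fun σ => LinearMap.toSpanSingleton _ _ (delB f σ)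

lemma delT_eq (f : Fin n → Mon N) (x : TaylorCx K n N) :
    delT f x = delL (K := K) f x := by
  rw [delT, delL, Finsupp.lsum_apply]
  rfl

noncomputable def mulRL (f : Fin n → Mon N) (τ : Finset (Fin n)) :
    TaylorCx K n N →ₗ[MvPolynomial (Fin N) K] TaylorCx K n N :=
  Finsupp.lsum ℕ fun σ' => LinearMap.toSpanSingleton _ _ (mulB f σ' τ)

noncomputable def mulSL (f : Fin n → Mon N) (σ : Finset (Fin n)) :
    TaylorCx K n N →ₗ[MvPolynomial (Fin N) K] TaylorCx K n N :=
  Finsupp.lsum ℕ fun τ' => LinearMap.toSpanSingleton _ _ (mulB f σ τ')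

lemma mulT_single_right (f : Fin n → Mon N) (x : TaylorCx K n N)
    (τ : Finset (Fin n)) :
    mulT f x (Finsupp.single τ 1) = mulRL (K := K) f τ x := by
  rw [mulT, mulRL, Finsupp.lsum_apply]
  apply Finsupp.sum_congr
  intro σ' _
  rw [Finsupp.sum_single_index (by simp)]
  simp

lemma mulT_single_left (f : Fin n → Mon N) (y : TaylorCx K n N)
    (σ : Finset (Fin n)) :
    mulT f (Finsupp.single σ 1) y = mulSL (K := K) f σ y := by
  rw [mulT, Finsupp.sum_single_index (by simp [Finsupp.sum]), mulSL,
    Finsupp.lsum_apply]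
  apply Finsupp.sum_congr
  intro τ' _
  simp

lemma delB_def (f : Fin n → Mon N) (σ : Finset (Fin n)) :
    delB (K := K) f σ = ∑ i ∈ σ, tsign σ i •
      Finsupp.single (σ.erase i) (toMon K (lcmExp f σ - lcmExp f (σ.erase i))) := rfl

lemma mulB_pos (f : Fin n → Mon N) {σ τ : Finset (Fin n)} (h : Disjoint σ τ) :
    mulB (K := K) f σ τ = wsign σ τ •
      Finsupp.single (σ ∪ τ)
        (toMon K (lcmExp f σ + lcmExp f τ - lcmExp f (σ ∪ τ))) := if_pos h

lemma mulB_neg (f : Fin n → Mon N) {σ τ : Finset (Fin n)} (h : ¬ Disjoint σ τ) :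
    mulB (K := K) f σ τ = 0 := if_neg h

lemma delL_single (f : Fin n → Mon N) (A : Finset (Fin n))
    (m : MvPolynomial (Fin N) K) :
    delL (K := K) f (Finsupp.single A m) = m • delB f A := by
  rw [delL, Finsupp.lsum_single, LinearMap.toSpanSingleton_apply]

lemma mulRL_single (f : Fin n → Mon N) (τ A : Finset (Fin n))
    (m : MvPolynomial (Fin N) K) :
    mulRL (K := K) f τ (Finsupp.single A m) = m • mulB f A τ := by
  rw [mulRL, Finsupp.lsum_single, LinearMap.toSpanSingleton_apply]

lemma mulSL_single (f : Fin n → Mon N) (σ A : Finset (Fin n))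
    (m : MvPolynomial (Fin N) K) :
    mulSL (K := K) f σ (Finsupp.single A m) = m • mulB f σ A := by
  rw [mulSL, Finsupp.lsum_single, LinearMap.toSpanSingleton_apply]


theorem stmt14 {K : Type*} [Field K] {n N : ℕ} (f : Fin n → Mon N)
    (σ τ : Finset (Fin n)) :
    delT f (mulT f (Finsupp.single σ (1 : MvPolynomial (Fin N) K))
        (Finsupp.single τ 1)) =
      mulT f (delT f (Finsupp.single σ 1)) (Finsupp.single τ 1) +
        ((-1 : ℤ) ^ σ.card) •
          mulT f (Finsupp.single σ 1) (delT f (Finsupp.single τ 1)) := by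
  have e1 : mulT f (Finsupp.single σ (1 : MvPolynomial (Fin N) K))
      (Finsupp.single τ 1) = mulB f σ τ := by
    rw [mulT_single_left, mulSL_single, one_smul]
  have e2 : delT f (Finsupp.single σ (1 : MvPolynomial (Fin N) K)) = delB f σ := by
    rw [delT_eq, delL_single, one_smul]
  have e3 : delT f (Finsupp.single τ (1 : MvPolynomial (Fin N) K)) = delB f τ := by
    rw [delT_eq, delL_single, one_smul]
  rw [e1, e2, e3, delT_eq, mulT_single_right, mulT_single_left]
  have hR : mulRL (K := K) f τ (delB f σ)
      = ∑ i ∈ σ, tsign σ i •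
          (toMon K (lcmExp f σ - lcmExp f (σ.erase i)) • mulB f (σ.erase i) τ) := by
    rw [delB_def, map_sum]
    exact Finset.sum_congr rfl fun i _ => by rw [map_zsmul, mulRL_single]
  have hS : mulSL (K := K) f σ (delB f τ)
      = ∑ i ∈ τ, tsign τ i •
          (toMon K (lcmExp f τ - lcmExp f (τ.erase i)) • mulB f σ (τ.erase i)) := by
    rw [delB_def, map_sum]
    exact Finset.sum_congr rfl fun i _ => by rw [map_zsmul, mulSL_single]
  rw [hR, hS]
  by_cases hd : Disjoint σ τ
  · have hL : delL (K := K) f (mulB f σ τ)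
        = ∑ i ∈ σ ∪ τ, Finsupp.single ((σ ∪ τ).erase i)
            ((wsign σ τ * tsign (σ ∪ τ) i) •
              (toMon K (lcmExp f σ + lcmExp f τ - lcmExp f (σ ∪ τ)) *
                toMon K (lcmExp f (σ ∪ τ) - lcmExp f ((σ ∪ τ).erase i)))) := by
      rw [mulB_pos f hd, map_zsmul, delL_single, delB_def, Finset.smul_sum,
        Finset.smul_sum]
      exact Finset.sum_congr rfl fun i _ => zps _ _ _ _ _
    rw [hL, Finset.sum_union hd]
    congr 1
    · refine Finset.sum_congr rfl fun i hi => ?_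
      have hdis : Disjoint (σ.erase i) τ := hd.mono_left (Finset.erase_subset i σ)
      have hiτ : i ∉ τ := fun h => (Finset.disjoint_left.mp hd hi) h
      have hset : (σ ∪ τ).erase i = σ.erase i ∪ τ := by
        rw [Finset.erase_union_distrib, Finset.erase_eq_of_notMem hiτ]
      rw [mulB_pos f hdis, zps, hset, sign1 hi hd, toMon_mul, toMon_mul]
      congr 2
      congr 1
      funext k
      have h1 := lcmExp_mono f (Finset.erase_subset i σ) k
      have h2 := lcmExp_union_le f σ τ k
      have h3 := lcmExp_union_le f (σ.erase i) τ k
      have h4 := lcmExp_mono f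
        (Finset.union_subset_union (Finset.erase_subset i σ) (subset_refl τ)) k
      simp only [Pi.add_apply, Pi.sub_apply]
      omega
    · rw [Finset.smul_sum]
      refine Finset.sum_congr rfl fun i hi => ?_
      have hdis : Disjoint σ (τ.erase i) := hd.mono_right (Finset.erase_subset i τ)
      have hiσ : i ∉ σ := fun h => (Finset.disjoint_left.mp hd h) hi
      have hset : (σ ∪ τ).erase i = σ ∪ τ.erase i := by
        rw [Finset.erase_union_distrib, Finset.erase_eq_of_notMem hiσ]
      rw [mulB_pos f hdis, zps, Finsupp.smul_single, smul_smul, hset,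
        sign2 hi hd, toMon_mul, toMon_mul]
      congr 2
      congr 1
      funext k
      have h1 := lcmExp_mono f (Finset.erase_subset i τ) k
      have h2 := lcmExp_union_le f σ τ k
      have h3 := lcmExp_union_le f σ (τ.erase i) k
      have h4 := lcmExp_mono f
        (Finset.union_subset_union (subset_refl σ) (Finset.erase_subset i τ)) k
      simp only [Pi.add_apply, Pi.sub_apply]
      omega
  · rw [mulB_neg f hd, map_zero]
    have hne : (σ ∩ τ).Nonempty := Finset.not_disjoint_iff_nonempty_inter.mp hd
    by_cases hone : (σ ∩ τ).card = 1
    · obtain ⟨i0, hi0⟩ := Finset.card_eq_one.mp hone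
      have hmem : i0 ∈ σ ∩ τ := hi0 ▸ Finset.mem_singleton_self i0
      obtain ⟨hi0σ, hi0τ⟩ := Finset.mem_inter.mp hmem
      have hdis1 : Disjoint (σ.erase i0) τ := by
        rw [Finset.disjoint_iff_inter_eq_empty, Finset.erase_inter, hi0,
          Finset.erase_singleton]
      have hdis2 : Disjoint σ (τ.erase i0) := by
        rw [Finset.disjoint_iff_inter_eq_empty, Finset.inter_erase, hi0,
          Finset.erase_singleton]
      have z1 : ∀ b ∈ σ, b ≠ i0 → tsign σ b •
          (toMon K (lcmExp f σ - lcmExp f (σ.erase b)) • mulB (K := K) f (σ.erase b) τ)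
            = 0 := by
        intro b _ hb
        have hnd : ¬ Disjoint (σ.erase b) τ :=
          Finset.not_disjoint_iff.mpr
            ⟨i0, Finset.mem_erase.mpr ⟨fun h => hb h.symm, hi0σ⟩, hi0τ⟩
        rw [mulB_neg f hnd, smul_zero, smul_zero]
      have z2 : ∀ b ∈ τ, b ≠ i0 → tsign τ b •
          (toMon K (lcmExp f τ - lcmExp f (τ.erase b)) • mulB (K := K) f σ (τ.erase b))
            = 0 := by
        intro b _ hb
        have hnd : ¬ Disjoint σ (τ.erase b) :=
          Finset.not_disjoint_iff.mpr
            ⟨i0, hi0σ, Finset.mem_erase.mpr ⟨fun h => hb h.symm, hi0τ⟩⟩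
        rw [mulB_neg f hnd, smul_zero, smul_zero]
      rw [Finset.sum_eq_single_of_mem i0 hi0σ z1,
        Finset.sum_eq_single_of_mem i0 hi0τ z2,
        mulB_pos f hdis1, zps, mulB_pos f hdis2, zps, Finsupp.smul_single,
        smul_smul]
      have hset1 : σ.erase i0 ∪ τ = σ ∪ τ := by
        ext a
        simp only [Finset.mem_union, Finset.mem_erase]
        constructor
        · rintro (⟨-, h⟩ | h)
          · exact Or.inl h
          · exact Or.inr h
        · rintro (h | h)
          · rcases eq_or_ne a i0 with rfl | hne'
            · exact Or.inr hi0τ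
            · exact Or.inl ⟨hne', h⟩
          · exact Or.inr h
      have hset2 : σ ∪ τ.erase i0 = σ ∪ τ := by
        ext a
        simp only [Finset.mem_union, Finset.mem_erase]
        constructor
        · rintro (h | ⟨-, h⟩)
          · exact Or.inl h
          · exact Or.inr h
        · rintro (h | h)
          · exact Or.inl h
          · rcases eq_or_ne a i0 with rfl | hne'
            · exact Or.inl hi0σ
            · exact Or.inr ⟨hne', h⟩
      rw [hset1, hset2, toMon_mul, toMon_mul]
      have hE : lcmExp f σ - lcmExp f (σ.erase i0) +
            (lcmExp f (σ.erase i0) + lcmExp f τ - lcmExp f (σ ∪ τ))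
          = lcmExp f τ - lcmExp f (τ.erase i0) +
            (lcmExp f σ + lcmExp f (τ.erase i0) - lcmExp f (σ ∪ τ)) := by
        funext k
        have h1 := lcmExp_mono f (Finset.erase_subset i0 σ) k
        have h2 := lcmExp_mono f (Finset.erase_subset i0 τ) k
        have h3 : lcmExp f (σ ∪ τ) k ≤ lcmExp f (σ.erase i0) k + lcmExp f τ k := by
          rw [← hset1]; exact lcmExp_union_le f _ _ k
        have h4 : lcmExp f (σ ∪ τ) k ≤ lcmExp f σ k + lcmExp f (τ.erase i0) k := by
          rw [← hset2]; exact lcmExp_union_le f _ _ k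
        simp only [Pi.add_apply, Pi.sub_apply]
        omega
      rw [hE, sign3 hi0σ hi0τ, neg_smul, ← Finsupp.single_add, neg_add_cancel,
        Finsupp.single_zero]
    · have hc : 2 ≤ (σ ∩ τ).card := by
        have := Finset.card_pos.mpr hne; omega
      obtain ⟨a, ha, b, hb, hab⟩ := Finset.one_lt_card.mp hc
      have z1 : ∀ i ∈ σ, tsign σ i •
          (toMon K (lcmExp f σ - lcmExp f (σ.erase i)) • mulB (K := K) f (σ.erase i) τ)
            = 0 := by
        intro i _
        have hnd : ¬ Disjoint (σ.erase i) τ := by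
          rw [Finset.not_disjoint_iff]
          rcases eq_or_ne a i with rfl | hai
          · exact ⟨b, Finset.mem_erase.mpr ⟨hab.symm, (Finset.mem_inter.mp hb).1⟩,
              (Finset.mem_inter.mp hb).2⟩
          · exact ⟨a, Finset.mem_erase.mpr ⟨hai, (Finset.mem_inter.mp ha).1⟩,
              (Finset.mem_inter.mp ha).2⟩
        rw [mulB_neg f hnd, smul_zero, smul_zero]
      have z2 : ∀ i ∈ τ, tsign τ i •
          (toMon K (lcmExp f τ - lcmExp f (τ.erase i)) • mulB (K := K) f σ (τ.erase i))
            = 0 := by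
        intro i _
        have hnd : ¬ Disjoint σ (τ.erase i) := by
          rw [Finset.not_disjoint_iff]
          rcases eq_or_ne a i with rfl | hai
          · exact ⟨b, (Finset.mem_inter.mp hb).1,
              Finset.mem_erase.mpr ⟨hab.symm, (Finset.mem_inter.mp hb).2⟩⟩
          · exact ⟨a, (Finset.mem_inter.mp ha).1,
              Finset.mem_erase.mpr ⟨hai, (Finset.mem_inter.mp ha).2⟩⟩
        rw [mulB_neg f hnd, smul_zero, smul_zero]
      rw [Finset.sum_eq_zero z1, Finset.sum_eq_zero z2, smul_zero, add_zero]
end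

section
/- Let f_1,...,f_n be monomials in R = K[x_1,...,x_n], set g_i = f_i/gcd(f_i, f_n) for i = 1,...,n−1. Then the map ψ from the Taylor complex T(g_1,...,g_{n−1}) to T(f_1,...,f_{n−1}) defined on basis elements by ψ(ē_σ) = (f_{σ∪{n}}/f_σ) e_σ is a complex homomorphism lifting the multiplication map R/((f_1,...,f_{n−1}) : f_n) → R/(f_1,...,f_{n−1}) by f_n, and the mapping cone of ψ is isomorphic to the Taylor complex T(f_1,...,f_n). -/
variable {K : Type*} [CommRing K] {n N : ℕ}

/-- the embedding `Fin n ↪ Fin (n+1)` -/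
def csEmb (n : ℕ) : Fin n ↪ Fin (n + 1) :=
  ⟨Fin.castSucc, Fin.castSucc_injective n⟩

open Classical in
/-- `ψ(ē_σ) = (f_{σ∪{n}} / f_σ) e_σ` on basis elements. -/
noncomputable def psiB {K : Type*} [CommRing K] {n N : ℕ}
    (f : Fin (n + 1) → Mon N) (σ : Finset (Fin n)) : TaylorCx K n N :=
  Finsupp.single σ
    (toMon K (lcmExp f (insert (Fin.last n) (σ.map (csEmb n))) -
      lcmExp f (σ.map (csEmb n))))

/-- `ψ` on the whole Taylor complex. -/
noncomputable def psiT {K : Type*} [CommRing K] {n N : ℕ}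
    (f : Fin (n + 1) → Mon N) (x : TaylorCx K n N) : TaylorCx K n N :=
  x.sum fun σ c => c • psiB f σ


namespace Stmt15Aux

open Finset

variable {K : Type*} [CommRing K] {n N : ℕ}

lemma toMon_mul (a b : Mon N) : toMon K a * toMon K b = toMon K (a + b) := by
  classical
  have h : Finsupp.equivFunOnFinite.symm (a + b)
      = Finsupp.equivFunOnFinite.symm a + Finsupp.equivFunOnFinite.symm b := by
    ext k; simp
  rw [toMon, toMon, toMon, MvPolynomial.monomial_mul, one_mul, h]

lemma nat_sup_sub (s : Finset (Fin n)) (a : Fin n → ℕ) (c : ℕ) :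
    (s.sup fun j => a j - c) = s.sup a - c := by
  apply le_antisymm
  · exact Finset.sup_le fun j hj => Nat.sub_le_sub_right (Finset.le_sup hj) c
  · rcases s.eq_empty_or_nonempty with h | h
    · simp [h]
    · obtain ⟨j₀, hj₀, hs⟩ := Finset.exists_mem_eq_sup s h a
      rw [hs]
      exact Finset.le_sup (f := fun j => a j - c) hj₀

lemma lcm_map (f : Fin (n+1) → Mon N) (σ : Finset (Fin n)) :
    lcmExp f (σ.map (csEmb n)) = lcmExp (fun i => f (Fin.castSucc i)) σ := by
  funext k
  simp only [lcmExp, Finset.sup_map]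
  rfl

lemma last_not_mem_map (σ : Finset (Fin n)) : Fin.last n ∉ σ.map (csEmb n) := by
  simp only [Finset.mem_map, csEmb, Function.Embedding.coeFn_mk]
  rintro ⟨j, -, h⟩
  exact absurd h (Fin.castSucc_lt_last j).ne

lemma lcm_insert_last (f : Fin (n+1) → Mon N) (σ : Finset (Fin n)) (k : Fin N) :
    lcmExp f (insert (Fin.last n) (σ.map (csEmb n))) k
      = max (f (Fin.last n) k) (lcmExp f (σ.map (csEmb n)) k) := by
  simp [lcmExp, Finset.sup_insert]

lemma lcm_g (f : Fin (n+1) → Mon N) (g : Fin n → Mon N)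
    (hg : ∀ i, g i = f (Fin.castSucc i) - f (Fin.last n)) (σ : Finset (Fin n)) (k : Fin N) :
    lcmExp g σ k = lcmExp f (σ.map (csEmb n)) k - f (Fin.last n) k := by
  rw [lcm_map]
  simp only [lcmExp]
  rw [← nat_sup_sub]
  apply Finset.sup_congr rfl
  intro j _
  rw [hg j]
  rfl

lemma lcm_mono (f : Fin n → Mon N) {σ τ : Finset (Fin n)} (h : σ ⊆ τ) (k : Fin N) :
    lcmExp f σ k ≤ lcmExp f τ k :=
  Finset.sup_mono h

lemma filter_lt_map (σ : Finset (Fin n)) (i : Fin n) :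
    ((σ.map (csEmb n)).filter fun j => j < Fin.castSucc i)
      = (σ.filter fun j => j < i).map (csEmb n) := by
  rw [Finset.filter_map]
  congr 1

lemma tsign_map (σ : Finset (Fin n)) (i : Fin n) :
    tsign (σ.map (csEmb n)) (Fin.castSucc i) = tsign σ i := by
  rw [tsign, tsign, filter_lt_map, Finset.card_map]

lemma tsign_insert_cs (τ : Finset (Fin n)) (i : Fin n) :
    tsign (insert (Fin.last n) (τ.map (csEmb n))) (Fin.castSucc i) = tsign τ i := by
  rw [tsign, Finset.filter_insert, if_neg (asymm (Fin.castSucc_lt_last i)),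
    filter_lt_map, Finset.card_map, tsign]

lemma tsign_insert_last (τ : Finset (Fin n)) :
    tsign (insert (Fin.last n) (τ.map (csEmb n))) (Fin.last n) = (-1) ^ τ.card := by
  rw [tsign, Finset.filter_insert, if_neg (lt_irrefl _)]
  congr 1
  rw [Finset.filter_true_of_mem, Finset.card_map]
  intro x hx
  obtain ⟨j, -, rfl⟩ := Finset.mem_map.1 hx
  exact Fin.castSucc_lt_last j

lemma erase_insert_cs (τ : Finset (Fin n)) (i : Fin n) :
    (insert (Fin.last n) (τ.map (csEmb n))).erase (Fin.castSucc i)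
      = insert (Fin.last n) ((τ.erase i).map (csEmb n)) := by
  rw [Finset.erase_insert_of_ne ((Fin.castSucc_lt_last i).ne'), Finset.map_erase]
  rfl


/-- inverse of `σ ↦ σ.map (csEmb n)` -/
noncomputable def deflate (σ : Finset (Fin (n+1))) : Finset (Fin n) :=
  σ.preimage (csEmb n) ((csEmb n).injective.injOn)

lemma mem_deflate {σ : Finset (Fin (n+1))} {j : Fin n} :
    j ∈ deflate σ ↔ Fin.castSucc j ∈ σ := Finset.mem_preimage

lemma deflate_map (τ : Finset (Fin n)) : deflate (τ.map (csEmb n)) = τ := by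
  ext j
  rw [mem_deflate]
  exact Finset.mem_map' (csEmb n)

lemma map_deflate {σ : Finset (Fin (n+1))} (h : Fin.last n ∉ σ) :
    (deflate σ).map (csEmb n) = σ := by
  ext b
  induction b using Fin.lastCases with
  | last =>
      simp only [h, iff_false]
      exact last_not_mem_map _
  | cast i =>
      rw [show (Fin.castSucc i : Fin (n+1)) = csEmb n i from rfl, Finset.mem_map' (csEmb n),
        mem_deflate]
      rfl

lemma deflate_insert_last (s : Finset (Fin (n+1))) :
    deflate (insert (Fin.last n) s) = deflate s := by
  ext j
  rw [mem_deflate, mem_deflate, Finset.mem_insert]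
  simp [(Fin.castSucc_lt_last j).ne]

lemma card_deflate {σ : Finset (Fin (n+1))} (h : Fin.last n ∈ σ) :
    (deflate σ).card = σ.card - 1 := by
  have h2 : Fin.last n ∉ σ.erase (Fin.last n) := Finset.notMem_erase _ _
  have : (deflate (σ.erase (Fin.last n))).map (csEmb n) = σ.erase (Fin.last n) :=
    map_deflate h2
  have hd : deflate σ = deflate (σ.erase (Fin.last n)) := by
    conv_lhs => rw [← Finset.insert_erase h]
    exact deflate_insert_last _
  rw [hd, ← Finset.card_map (f := csEmb n), this, Finset.card_erase_of_mem h]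

section Maps

variable (K) (N)

/-- bundled Taylor differential. -/
noncomputable def delL (f : Fin n → Mon N) :
    TaylorCx K n N →ₗ[MvPolynomial (Fin N) K] TaylorCx K n N :=
  Finsupp.lsum (MvPolynomial (Fin N) K) fun σ =>
    LinearMap.toSpanSingleton _ _ (delB f σ)

/-- bundled `ψ`. -/
noncomputable def psiL (f : Fin (n+1) → Mon N) :
    TaylorCx K n N →ₗ[MvPolynomial (Fin N) K] TaylorCx K n N :=
  Finsupp.lsum (MvPolynomial (Fin N) K) fun σ =>
    LinearMap.toSpanSingleton _ _ (psiB f σ)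

variable {K N}

lemma delT_eq (f : Fin n → Mon N) (x : TaylorCx K n N) : delT f x = delL K N f x := rfl

lemma psiT_eq (f : Fin (n+1) → Mon N) (x : TaylorCx K n N) :
    psiT f x = psiL K N f x := rfl

lemma delL_single (f : Fin n → Mon N) (σ : Finset (Fin n)) (c : MvPolynomial (Fin N) K) :
    delL K N f (Finsupp.single σ c) = c • delB f σ := by
  rw [delL, Finsupp.lsum_single]; rfl

lemma psiL_single (f : Fin (n+1) → Mon N) (σ : Finset (Fin n)) (c : MvPolynomial (Fin N) K) :
    psiL K N f (Finsupp.single σ c) = c • psiB f σ := by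
  rw [psiL, Finsupp.lsum_single]; rfl

end Maps


lemma psi_comm (f : Fin (n+1) → Mon N) (g : Fin n → Mon N)
    (hg : ∀ i, g i = f (Fin.castSucc i) - f (Fin.last n)) (σ : Finset (Fin n)) :
    psiL K N f (delB g σ)
      = toMon K (lcmExp f (insert (Fin.last n) (σ.map (csEmb n))) - lcmExp f (σ.map (csEmb n)))
        • delB (fun i => f (Fin.castSucc i)) σ := by
  classical
  rw [delB, delB, map_sum, Finset.smul_sum]
  apply Finset.sum_congr rfl
  intro i hi
  rw [map_zsmul, psiL_single, psiB,
    smul_comm (toMon K (lcmExp f (insert (Fin.last n) (σ.map (csEmb n)))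
      - lcmExp f (σ.map (csEmb n)))) (tsign σ i)]
  congr 1
  rw [Finsupp.smul_single, Finsupp.smul_single, smul_eq_mul, smul_eq_mul, toMon_mul, toMon_mul]
  congr 2
  funext k
  have hsub : (σ.erase i).map (csEmb n) ⊆ σ.map (csEmb n) :=
    Finset.map_subset_map.2 (Finset.erase_subset i σ)
  have hba : lcmExp f ((σ.erase i).map (csEmb n)) k ≤ lcmExp f (σ.map (csEmb n)) k :=
    lcm_mono f hsub k
  have h1 := lcm_g f g hg σ k
  have h2 := lcm_g f g hg (σ.erase i) k
  have h3 := lcm_insert_last f σ k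
  have h4 := lcm_insert_last f (σ.erase i) k
  have h5 := congrFun (lcm_map f σ) k
  have h6 := congrFun (lcm_map f (σ.erase i)) k
  simp only [Pi.add_apply, Pi.sub_apply]
  rw [h1, h2, h3, h4, ← h5, ← h6]
  omega

lemma part1 (f : Fin (n+1) → Mon N) (g : Fin n → Mon N)
    (hg : ∀ i, g i = f (Fin.castSucc i) - f (Fin.last n)) (x : TaylorCx K n N) :
    psiT f (delT g x) = delT (fun i => f (Fin.castSucc i)) (psiT f x) := by
  rw [delT_eq, psiT_eq, psiT_eq, delT_eq, ← LinearMap.comp_apply, ← LinearMap.comp_apply]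
  congr 1
  apply Finsupp.lhom_ext
  intro σ c
  simp only [LinearMap.comp_apply, delL_single, psiL_single, map_smul]
  rw [psi_comm f g hg σ, psiB, delL_single]


section Cone

variable (K N)

/-- the iso cone(ψ) ≅ T(f), forward direction. -/
noncomputable def Amap (n : ℕ) :
    (TaylorCx K n N × TaylorCx K n N) →ₗ[MvPolynomial (Fin N) K] TaylorCx K (n+1) N :=
  LinearMap.coprod
    (Finsupp.lsum (MvPolynomial (Fin N) K) fun σ => Finsupp.lsingle (σ.map (csEmb n)))
    (Finsupp.lsum (MvPolynomial (Fin N) K) fun τ =>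
      ((-1 : MvPolynomial (Fin N) K) ^ τ.card) •
        Finsupp.lsingle (insert (Fin.last n) (τ.map (csEmb n))))

/-- the iso cone(ψ) ≅ T(f), backward direction. -/
noncomputable def Bmap (n : ℕ) :
    TaylorCx K (n+1) N →ₗ[MvPolynomial (Fin N) K] TaylorCx K n N × TaylorCx K n N :=
  Finsupp.lsum (MvPolynomial (Fin N) K) fun σ =>
    if Fin.last n ∈ σ then
      ((-1 : MvPolynomial (Fin N) K) ^ (σ.card - 1)) •
        ((LinearMap.inr _ _ _).comp (Finsupp.lsingle (deflate σ)))
    else (LinearMap.inl _ _ _).comp (Finsupp.lsingle (deflate σ))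

variable {K N}

lemma Amap_inl (σ : Finset (Fin n)) (c : MvPolynomial (Fin N) K) :
    Amap K N n (Finsupp.single σ c, 0) = Finsupp.single (σ.map (csEmb n)) c := by
  rw [Amap, LinearMap.coprod_apply, map_zero, add_zero, Finsupp.lsum_single,
    Finsupp.lsingle_apply]

lemma Amap_inr (τ : Finset (Fin n)) (c : MvPolynomial (Fin N) K) :
    Amap K N n (0, Finsupp.single τ c)
      = ((-1 : MvPolynomial (Fin N) K) ^ τ.card) •
          Finsupp.single (insert (Fin.last n) (τ.map (csEmb n))) c := by
  rw [Amap, LinearMap.coprod_apply, map_zero, zero_add, Finsupp.lsum_single,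
    LinearMap.smul_apply, Finsupp.lsingle_apply]

lemma Bmap_single_mem {σ : Finset (Fin (n+1))} (h : Fin.last n ∈ σ)
    (c : MvPolynomial (Fin N) K) :
    Bmap K N n (Finsupp.single σ c)
      = ((-1 : MvPolynomial (Fin N) K) ^ (σ.card - 1)) •
          ((0 : TaylorCx K n N), Finsupp.single (deflate σ) c) := by
  rw [Bmap, Finsupp.lsum_single, if_pos h, LinearMap.smul_apply, LinearMap.comp_apply,
    Finsupp.lsingle_apply, LinearMap.inr_apply]

lemma Bmap_single_not_mem {σ : Finset (Fin (n+1))} (h : Fin.last n ∉ σ)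
    (c : MvPolynomial (Fin N) K) :
    Bmap K N n (Finsupp.single σ c) = (Finsupp.single (deflate σ) c, 0) := by
  rw [Bmap, Finsupp.lsum_single, if_neg h, LinearMap.comp_apply,
    Finsupp.lsingle_apply, LinearMap.inl_apply]

lemma neg_one_sq_pow (m : ℕ) :
    ((-1 : MvPolynomial (Fin N) K) ^ m) * ((-1) ^ m) = 1 := by
  rw [← pow_add]
  exact Even.neg_one_pow ⟨m, rfl⟩

lemma AB_id : (Amap K N n).comp (Bmap K N n) = LinearMap.id := by
  apply Finsupp.lhom_ext
  intro σ c
  rw [LinearMap.comp_apply, LinearMap.id_apply]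
  by_cases h : Fin.last n ∈ σ
  · rw [Bmap_single_mem h, map_smul, Amap_inr, card_deflate h, smul_smul, neg_one_sq_pow,
      one_smul]
    congr 1
    have h2 : Fin.last n ∉ σ.erase (Fin.last n) := Finset.notMem_erase _ _
    have hd : deflate σ = deflate (σ.erase (Fin.last n)) := by
      conv_lhs => rw [← Finset.insert_erase h]
      exact deflate_insert_last _
    rw [hd, map_deflate h2, Finset.insert_erase h]
  · rw [Bmap_single_not_mem h, Amap_inl, map_deflate h]

lemma BA_id : (Bmap K N n).comp (Amap K N n) = LinearMap.id := by
  apply LinearMap.prod_ext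
  · apply Finsupp.lhom_ext
    intro σ c
    rw [LinearMap.comp_apply, LinearMap.comp_apply, LinearMap.coe_inl]
    show Bmap K N n (Amap K N n (Finsupp.single σ c, 0)) = _
    rw [Amap_inl, Bmap_single_not_mem (last_not_mem_map σ), deflate_map]
    rfl
  · apply Finsupp.lhom_ext
    intro τ c
    rw [LinearMap.comp_apply, LinearMap.comp_apply, LinearMap.coe_inr]
    show Bmap K N n (Amap K N n (0, Finsupp.single τ c)) = _
    rw [Amap_inr, map_smul,
      Bmap_single_mem (Finset.mem_insert_self _ _),
      Finset.card_insert_of_notMem (last_not_mem_map τ), Nat.add_sub_cancel, Finset.card_map,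
      deflate_insert_last, deflate_map, smul_smul, neg_one_sq_pow, one_smul]
    rfl


lemma A2_delB (g : Fin n → Mon N) (τ : Finset (Fin n)) :
    Amap K N n (0, delB g τ)
      = ∑ i ∈ τ, tsign τ i •
          (((-1 : MvPolynomial (Fin N) K) ^ (τ.erase i).card) •
            Finsupp.single (insert (Fin.last n) ((τ.erase i).map (csEmb n)))
              (toMon K (lcmExp g τ - lcmExp g (τ.erase i)))) := by
  have h0 : ((0 : TaylorCx K n N), delB (K := K) g τ)
      = LinearMap.inr (MvPolynomial (Fin N) K) _ _ (delB g τ) := rfl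
  rw [h0, ← LinearMap.comp_apply, delB, map_sum]
  apply Finset.sum_congr rfl
  intro i hi
  rw [map_zsmul, LinearMap.comp_apply, LinearMap.inr_apply, Amap_inr]

lemma A1_delB (f : Fin (n+1) → Mon N) (σ : Finset (Fin n)) :
    Amap K N n (delB (fun i => f (Fin.castSucc i)) σ, 0)
      = delB f (σ.map (csEmb n)) := by
  have h0 : (delB (K := K) (fun i => f (Fin.castSucc i)) σ, (0 : TaylorCx K n N))
      = LinearMap.inl (MvPolynomial (Fin N) K) _ _ (delB (fun i => f (Fin.castSucc i)) σ) := rfl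
  rw [h0, ← LinearMap.comp_apply, delB, delB, map_sum, Finset.sum_map]
  apply Finset.sum_congr rfl
  intro i hi
  rw [map_zsmul, LinearMap.comp_apply, LinearMap.inl_apply, Amap_inl]
  show _ = tsign (σ.map (csEmb n)) (Fin.castSucc i) •
    Finsupp.single ((σ.map (csEmb n)).erase (Fin.castSucc i))
      (toMon K (lcmExp f (σ.map (csEmb n)) - lcmExp f ((σ.map (csEmb n)).erase (Fin.castSucc i))))
  rw [tsign_map, show (Fin.castSucc i : Fin (n+1)) = csEmb n i from rfl,
    ← Finset.map_erase, lcm_map, lcm_map]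

lemma delB_insert (f : Fin (n+1) → Mon N) (τ : Finset (Fin n)) :
    delB (K := K) f (insert (Fin.last n) (τ.map (csEmb n)))
      = ((-1 : ℤ) ^ τ.card) • Finsupp.single (τ.map (csEmb n))
          (toMon K (lcmExp f (insert (Fin.last n) (τ.map (csEmb n)))
            - lcmExp f (τ.map (csEmb n))))
        + ∑ i ∈ τ, tsign τ i •
            Finsupp.single (insert (Fin.last n) ((τ.erase i).map (csEmb n)))
              (toMon K (lcmExp f (insert (Fin.last n) (τ.map (csEmb n)))
                - lcmExp f (insert (Fin.last n) ((τ.erase i).map (csEmb n))))) := by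
  rw [delB, Finset.sum_insert (last_not_mem_map τ)]
  congr 1
  · rw [tsign_insert_last, Finset.erase_insert (last_not_mem_map τ)]
  · rw [Finset.sum_map]
    apply Finset.sum_congr rfl
    intro i hi
    show tsign _ (Fin.castSucc i) • Finsupp.single
        ((insert (Fin.last n) (τ.map (csEmb n))).erase (Fin.castSucc i))
        (toMon K (lcmExp f (insert (Fin.last n) (τ.map (csEmb n)))
          - lcmExp f ((insert (Fin.last n) (τ.map (csEmb n))).erase (Fin.castSucc i)))) = _
    rw [tsign_insert_cs, erase_insert_cs]

lemma g_exp_eq (f : Fin (n+1) → Mon N) (g : Fin n → Mon N)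
    (hg : ∀ i, g i = f (Fin.castSucc i) - f (Fin.last n)) (τ : Finset (Fin n)) (i : Fin n) :
    lcmExp g τ - lcmExp g (τ.erase i)
      = lcmExp f (insert (Fin.last n) (τ.map (csEmb n)))
        - lcmExp f (insert (Fin.last n) ((τ.erase i).map (csEmb n))) := by
  funext k
  have hba : lcmExp f ((τ.erase i).map (csEmb n)) k ≤ lcmExp f (τ.map (csEmb n)) k :=
    lcm_mono f (Finset.map_subset_map.2 (Finset.erase_subset i τ)) k
  have h1 := lcm_g f g hg τ k
  have h2 := lcm_g f g hg (τ.erase i) k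
  have h3 := lcm_insert_last f τ k
  have h4 := lcm_insert_last f (τ.erase i) k
  simp only [Pi.sub_apply]
  rw [h1, h2, h3, h4]
  omega

lemma Amap_cone_snd (f : Fin (n+1) → Mon N) (g : Fin n → Mon N)
    (hg : ∀ i, g i = f (Fin.castSucc i) - f (Fin.last n)) (τ : Finset (Fin n)) :
    Amap K N n (psiB f τ, -(delB g τ))
      = ((-1 : MvPolynomial (Fin N) K) ^ τ.card) •
          delB f (insert (Fin.last n) (τ.map (csEmb n))) := by
  have hsplit : ((psiB (K := K) f τ, -(delB (K := K) g τ)) :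
        TaylorCx K n N × TaylorCx K n N)
      = (psiB f τ, 0) + -(0, delB g τ) := by
    rw [Prod.neg_mk, neg_zero, Prod.mk_add_mk, add_zero, zero_add]
  rw [hsplit, map_add, map_neg, A2_delB, psiB, Amap_inl, delB_insert, smul_add]
  congr 1
  · rw [← Int.cast_smul_eq_zsmul (MvPolynomial (Fin N) K), smul_smul]
    push_cast
    rw [neg_one_sq_pow, one_smul]
  · rw [Finset.smul_sum, ← Finset.sum_neg_distrib]
    apply Finset.sum_congr rfl
    intro i hi
    rw [g_exp_eq f g hg τ i]
    have hc : (τ.erase i).card + 1 = τ.card := by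
      rw [Finset.card_erase_of_mem hi]
      exact Nat.sub_add_cancel (Finset.card_pos.2 ⟨i, hi⟩)
    rw [smul_comm ((-1 : MvPolynomial (Fin N) K) ^ τ.card) (tsign τ i), ← hc, pow_succ,
      mul_neg_one, neg_smul, smul_neg]


lemma cone_comm_fst (f : Fin (n+1) → Mon N) :
    (Amap K N n) ∘ₗ (LinearMap.inl (MvPolynomial (Fin N) K) _ _)
        ∘ₗ (delL K N (fun i => f (Fin.castSucc i)))
      = (delL K N f) ∘ₗ (Amap K N n) ∘ₗ (LinearMap.inl _ _ _) := by
  apply Finsupp.lhom_ext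
  intro σ c
  simp only [LinearMap.comp_apply, LinearMap.inl_apply]
  rw [delL_single, Amap_inl, delL_single]
  have h : ((c • delB (K := K) (fun i => f (Fin.castSucc i)) σ, (0 : TaylorCx K n N)) :
        TaylorCx K n N × TaylorCx K n N)
      = c • (delB (fun i => f (Fin.castSucc i)) σ, 0) := by
    rw [Prod.smul_mk, smul_zero]
  rw [h, map_smul, A1_delB]

lemma cone_comm_snd (f : Fin (n+1) → Mon N) (g : Fin n → Mon N)
    (hg : ∀ i, g i = f (Fin.castSucc i) - f (Fin.last n)) :
    (Amap K N n) ∘ₗ ((psiL K N f).prod (-(delL K N g)))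
      = (delL K N f) ∘ₗ (Amap K N n) ∘ₗ LinearMap.inr _ _ _ := by
  apply Finsupp.lhom_ext
  intro τ c
  simp only [LinearMap.comp_apply, LinearMap.prod_apply, Function.prod, LinearMap.neg_apply,
    LinearMap.inr_apply]
  rw [psiL_single, delL_single, Amap_inr, map_smul, delL_single]
  have h : ((c • psiB (K := K) f τ, -(c • delB (K := K) g τ)) :
        TaylorCx K n N × TaylorCx K n N)
      = c • (psiB f τ, -(delB g τ)) := by
    rw [Prod.smul_mk, smul_neg]
  rw [h, map_smul, Amap_cone_snd f g hg, smul_comm]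

lemma cone_comm (f : Fin (n+1) → Mon N) (g : Fin n → Mon N)
    (hg : ∀ i, g i = f (Fin.castSucc i) - f (Fin.last n))
    (p : TaylorCx K n N × TaylorCx K n N) :
    Amap K N n (delT (fun i => f (Fin.castSucc i)) p.1 + psiT f p.2, -(delT g p.2))
      = delT f (Amap K N n p) := by
  have h1 := LinearMap.congr_fun (cone_comm_fst (K := K) (N := N) f) p.1
  have h2 := LinearMap.congr_fun (cone_comm_snd (K := K) (N := N) f g hg) p.2
  simp only [LinearMap.comp_apply, LinearMap.inl_apply, LinearMap.inr_apply,
    LinearMap.prod_apply, Function.prod, LinearMap.neg_apply] at h1 h2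
  rw [delT_eq, delT_eq, psiT_eq]
  have hp : ((delL K N (fun i => f (Fin.castSucc i)) p.1 + psiL K N f p.2,
        -(delL K N g p.2)) : TaylorCx K n N × TaylorCx K n N)
      = (delL K N (fun i => f (Fin.castSucc i)) p.1, 0)
        + (psiL K N f p.2, -(delL K N g p.2)) := by
    rw [Prod.mk_add_mk, zero_add]
  have hp2 : ((p.1, (0 : TaylorCx K n N)) : TaylorCx K n N × TaylorCx K n N)
      + ((0 : TaylorCx K n N), p.2) = p := by
    rw [Prod.mk_add_mk, add_zero, zero_add]
  rw [hp, map_add, h1, h2, ← map_add, ← map_add, hp2]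
  exact (delT_eq f _).symm

end Cone

end Stmt15Aux

theorem stmt15 {K : Type*} [Field K] {n N : ℕ} (f : Fin (n + 1) → Mon N)
    -- `g_i = f_i / gcd(f_i, f_n)` (on exponent vectors, a truncated
    -- subtraction)
    (g : Fin n → Mon N) (hg : ∀ i, g i = f (Fin.castSucc i) - f (Fin.last n)) :
    -- (1) `ψ` is a complex homomorphism `T(g) → T(f₁,…,f_{n-1})`
    (∀ x : TaylorCx K n N,
      psiT f (delT g x) = delT (fun i => f (Fin.castSucc i)) (psiT f x)) ∧
    -- (2) `ψ` lifts multiplication by `f_n` modulo `(f₁,…,f_{n-1})`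
    (∀ c : MvPolynomial (Fin N) K,
      Ideal.Quotient.mk
          (Ideal.span (Set.range fun i : Fin n => toMon K (f (Fin.castSucc i))))
          ((psiT f (Finsupp.single ∅ c)) ∅) =
        Ideal.Quotient.mk _ (toMon K (f (Fin.last n)) * c)) ∧
    -- (3) the mapping cone of `ψ` is isomorphic, as a complex, to the Taylor
    -- complex `T(f₁,…,fₙ)`
    (∃ α : (TaylorCx K n N × TaylorCx K n N) ≃ₗ[MvPolynomial (Fin N) K]
        TaylorCx K (n + 1) N,
      -- `α` commutes with the differentials (cone differential
      -- `D(b, a) = (∂b + ψ(a), -∂a)`)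
      (∀ p : TaylorCx K n N × TaylorCx K n N,
        α (delT (fun i => f (Fin.castSucc i)) p.1 + psiT f p.2,
            -(delT g p.2)) = delT f (α p)) ∧
      -- `α` preserves the homological grading `C(ψ)_k = T(f')_k ⊕ T(g)_{k-1}`
      (∀ k : ℕ, ∀ p ∈ Submodule.span (MvPolynomial (Fin N) K)
          (((fun σ : Finset (Fin n) =>
              ((Finsupp.single σ 1, 0) : TaylorCx K n N × TaylorCx K n N)) ''
                {σ | σ.card = k}) ∪
            ((fun τ : Finset (Fin n) =>
              ((0, Finsupp.single τ 1) : TaylorCx K n N × TaylorCx K n N)) ''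
                {τ | τ.card + 1 = k})),
        α p ∈ Submodule.span (MvPolynomial (Fin N) K)
          ((fun σ : Finset (Fin (n + 1)) =>
            (Finsupp.single σ 1 : TaylorCx K (n + 1) N)) '' {σ | σ.card = k}))) := by
  
  classical
  refine ⟨fun x => Stmt15Aux.part1 f g hg x, ?_, ?_⟩
  · intro c
    have h1 : psiT f (Finsupp.single ∅ c) = c • psiB f ∅ :=
      Finsupp.sum_single_index (by rw [zero_smul])
    have h2 : psiB (K := K) f ∅ = Finsupp.single ∅ (toMon K (f (Fin.last n))) := by
      rw [psiB]
      congr 2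
      funext k
      simp [lcmExp, Finset.map_empty]
    rw [h1, h2, Finsupp.smul_single, smul_eq_mul, Finsupp.single_eq_same,
      mul_comm c (toMon K (f (Fin.last n)))]
  · refine ⟨LinearEquiv.ofLinear (Stmt15Aux.Amap K N n) (Stmt15Aux.Bmap K N n)
      Stmt15Aux.AB_id Stmt15Aux.BA_id, ?_, ?_⟩
    · intro p
      rw [LinearEquiv.ofLinear_apply, LinearEquiv.ofLinear_apply]
      exact Stmt15Aux.cone_comm f g hg p
    · intro k p hp
      rw [LinearEquiv.ofLinear_apply]
      refine Submodule.span_induction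
        (p := fun x _ => Stmt15Aux.Amap K N n x ∈ Submodule.span (MvPolynomial (Fin N) K)
          ((fun σ : Finset (Fin (n + 1)) =>
            (Finsupp.single σ 1 : TaylorCx K (n + 1) N)) '' {σ | σ.card = k}))
        ?_ ?_ ?_ ?_ hp
      · rintro x (⟨σ, hσ, rfl⟩ | ⟨τ, hτ, rfl⟩) <;> dsimp only
        · rw [Stmt15Aux.Amap_inl]
          exact Submodule.subset_span ⟨σ.map (csEmb n),
            by rw [Set.mem_setOf_eq, Finset.card_map]; exact hσ, rfl⟩
        · rw [Stmt15Aux.Amap_inr]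
          refine Submodule.smul_mem _ _ (Submodule.subset_span
            ⟨insert (Fin.last n) (τ.map (csEmb n)), ?_, rfl⟩)
          rw [Set.mem_setOf_eq,
            Finset.card_insert_of_notMem (Stmt15Aux.last_not_mem_map τ), Finset.card_map]
          exact hτ
      · rw [map_zero]; exact Submodule.zero_mem _
      · intro x y hx hy ihx ihy
        rw [map_add]; exact Submodule.add_mem _ ihx ihy
      · intro a x hx ih
        rw [map_smul]; exact Submodule.smul_mem _ a ih
end
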